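/- Let x be an α-substitutive sequence over a finite alphabet C and let u be a non-empty word over C. Then the characteristic sequence t ∈ {0,1}^ℕ of the occurrences of u in x, defined by t_i = 1 if x_i x_{i+1} ⋯ x_{i+|u|−1} = u and t_i = 0 otherwise, is α-substitutive. -/

import Mathlib

open Filter Topology
open scoped Classical

namespace Cobham

def applyWord {A B : Type*} (σ : A → List B) (w : List A) : List B := w.flatMap σ

def iterWord {A : Type*} (σ : A → List A) (n : ℕ) (w : List A) : List A :=
  (applyWord σ)^[n] w

def lengthIter {A : Type*} (σ : A → List A) (n : ℕ) (a : A) : ℕ :=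
  (iterWord σ n [a]).length

def IsSubstitution {A : Type*} (σ : A → List A) : Prop :=
  ∀ a : A, Tendsto (fun n => lengthIter σ n a) atTop atTop

def IsPrefixOfSeq {A : Type*} (w : List A) (x : ℕ → A) : Prop :=
  ∀ i : Fin w.length, w.get i = x i

def seqTake {A : Type*} (x : ℕ → A) (n : ℕ) : List A := List.ofFn (fun i : Fin n => x i)

def IsFixedPoint {A : Type*} (σ : A → List A) (x : ℕ → A) : Prop :=
  ∀ n : ℕ, IsPrefixOfSeq (applyWord σ (seqTake x n)) x

def IsProperFixedPoint {A : Type*} (σ : A → List A) (x : ℕ → A) : Prop :=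
  IsFixedPoint σ x ∧ ∀ a : A, ∃ i : ℕ, x i = a

def incidenceMatrix {A : Type*} [DecidableEq A] (σ : A → List A) : Matrix A A ℝ :=
  fun i j => ((σ j).count i : ℝ)

def IsPrimitiveMatrix {A : Type*} [Fintype A] [DecidableEq A] (M : Matrix A A ℝ) : Prop :=
  ∃ n : ℕ, 0 < n ∧ ∀ i j, 0 < (M ^ n) i j

def IsDominantEigenvalue {A : Type*} [Fintype A] [DecidableEq A] (M : Matrix A A ℝ) (α : ℝ) : Prop :=
  0 ≤ α ∧ Module.End.HasEigenvalue (Matrix.toLin' M) α ∧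
    ∀ μ : ℂ, Module.End.HasEigenvalue (Matrix.toLin' (M.map Complex.ofReal)) μ → ‖μ‖ ≤ α

def IsPerron (α : ℝ) : Prop :=
  IsIntegral ℤ α ∧ 1 ≤ α ∧
    ∀ μ : ℂ, Polynomial.aeval μ (minpoly ℤ α) = 0 → μ ≠ (α : ℂ) → ‖μ‖ < α

def MultIndep (α β : ℝ) : Prop :=
  ∀ k l : ℕ, 0 < k → 0 < l → α ^ k ≠ β ^ l

def IsUltimatelyPeriodic {C : Type*} (x : ℕ → C) : Prop :=
  ∃ p : ℕ, 0 < p ∧ ∃ N : ℕ, ∀ n : ℕ, N ≤ n → x (n + p) = x n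

def IsPeriodic {C : Type*} (x : ℕ → C) : Prop :=
  ∃ p : ℕ, 0 < p ∧ ∀ n : ℕ, x (n + p) = x n

def OccursAt {C : Type*} (w : List C) (x : ℕ → C) (i : ℕ) : Prop :=
  ∀ j : Fin w.length, w.get j = x (i + j)

def OccursInfinitely {C : Type*} (w : List C) (x : ℕ → C) : Prop :=
  ∀ N : ℕ, ∃ i : ℕ, N ≤ i ∧ OccursAt w x i

def BoundedGaps {C : Type*} (w : List C) (x : ℕ → C) : Prop :=
  ∃ g : ℕ, ∀ N : ℕ, ∃ i : ℕ, N ≤ i ∧ i < N + g ∧ OccursAt w x i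

def InLanguage {C : Type*} (w : List C) (x : ℕ → C) : Prop := ∃ i : ℕ, OccursAt w x i

def IsSubstitutiveSeq {C : Type*} (α : ℝ) (x : ℕ → C) : Prop :=
  ∃ (B : Type) (_ : Fintype B) (_ : DecidableEq B) (σ : B → List B) (y : ℕ → B) (φ : B → C),
    IsSubstitution σ ∧ IsProperFixedPoint σ y ∧
      IsDominantEigenvalue (incidenceMatrix σ) α ∧ x = φ ∘ y

def IsPrimitiveSubstitutiveSeq {C : Type*} (α : ℝ) (x : ℕ → C) : Prop :=
  ∃ (B : Type) (_ : Fintype B) (_ : DecidableEq B) (σ : B → List B) (y : ℕ → B) (φ : B → C),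
    IsSubstitution σ ∧ IsPrimitiveMatrix (incidenceMatrix σ) ∧ IsProperFixedPoint σ y ∧
      IsDominantEigenvalue (incidenceMatrix σ) α ∧ x = φ ∘ y

def HasGrowthTypeWith {A : Type*} (σ : A → List A) (a : A) (d : ℕ) (θ : ℝ) (c : ℝ) : Prop :=
  0 < c ∧ 1 ≤ θ ∧
    Tendsto (fun n : ℕ => (lengthIter σ n a : ℝ) / (c * (n : ℝ) ^ d * θ ^ n)) atTop (𝓝 1)

def HasGrowthType {A : Type*} (σ : A → List A) (a : A) (d : ℕ) (θ : ℝ) : Prop :=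
  ∃ c : ℝ, HasGrowthTypeWith σ a d θ c

noncomputable def lambdaSum {A : Type*} (d : A → ℕ) (θ c : A → ℝ) (Θ : ℝ) (D : ℕ)
    (u : List A) : ℝ :=
  (u.map (fun b => if θ b = Θ ∧ d b = D then c b else 0)).sum

def restrictSub {A : Type*} {l : ℕ} (σ : A → List A) (part : A → Fin l) (i : Fin l) :
    {a : A // part a = i} → List {a : A // part a = i} :=
  fun a => (σ a.1).filterMap (fun b => if h : part b = i then some ⟨b, h⟩ else none)

def subMatrix {A : Type*} (M : Matrix A A ℝ) (P : A → Prop) :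
    Matrix {a : A // P a} {a : A // P a} ℝ := fun a b => M a.1 b.1

def SatisfiesC {A : Type*} [DecidableEq A] (σ : A → List A) (l q : ℕ)
    (part : A → Fin l) : Prop :=
  q < l ∧ Function.Surjective part ∧
  (∀ a b : A, a ∈ σ b → part a = part b ∨
      ((part b : ℕ) < q ∧ (part b : ℕ) < (part a : ℕ))) ∧
  (∀ i : Fin l, (i : ℕ) < q →
      (∀ a b : A, part a = i → part b = i → (σ b).count a = 0) ∨
      (∀ a b : A, part a = i → part b = i → 0 < (σ b).count a)) ∧
  (∀ i : Fin l, q ≤ (i : ℕ) → ∀ a b : A, part a = i → part b = i → 0 < (σ b).count a) ∧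
  (∀ i : Fin l, (i : ℕ) < q →
      ∃ j : Fin l, (i : ℕ) < (j : ℕ) ∧ ∃ a b : A, part a = j ∧ part b = i ∧ a ∈ σ b) ∧
  (∀ i : Fin l, (∃ a b : A, part a = i ∧ part b = i ∧ 0 < (σ b).count a) →
      ∃ (a : A) (u : List A), part a = i ∧
        (σ a).filter (fun b => decide (part b = i)) = a :: u ∧
        (u = [] ↔ ((∀ b : A, part b = i → b = a) ∧ (σ a).count a = 1)))

def IsGoodSubstitution {A : Type*} [Fintype A] [DecidableEq A] (σ : A → List A) (α : ℝ) : Prop :=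
  IsSubstitution σ ∧ IsDominantEigenvalue (incidenceMatrix σ) α ∧
    ∃ (l q : ℕ) (part : A → Fin l), SatisfiesC σ l q part ∧
      ∃ i : Fin l, q ≤ (i : ℕ) ∧
        IsDominantEigenvalue (incidenceMatrix (restrictSub σ part i)) α


open scoped NNReal ENNReal Matrix

section Basic
variable {A : Type*}

lemma applyWord_nil (σ : A → List A) : applyWord σ [] = [] := rfl
lemma applyWord_cons (σ : A → List A) (a : A) (l : List A) :
    applyWord σ (a :: l) = σ a ++ applyWord σ l := rfl
lemma applyWord_append (σ : A → List A) (l r : List A) :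
    applyWord σ (l ++ r) = applyWord σ l ++ applyWord σ r := by
  simp [applyWord]
lemma applyWord_singleton (σ : A → List A) (a : A) : applyWord σ [a] = σ a := by
  simp [applyWord]
lemma iterWord_zero (σ : A → List A) (l : List A) : iterWord σ 0 l = l := rfl
lemma iterWord_succ' (σ : A → List A) (n : ℕ) (l : List A) :
    iterWord σ (n + 1) l = applyWord σ (iterWord σ n l) :=
  Function.iterate_succ_apply' _ _ _

lemma subst_ne_nil {σ : A → List A} (hσ : IsSubstitution σ) (a : A) : σ a ≠ [] := by
  intro h
  have h1 : ∀ n, iterWord σ (n + 1) [a] = [] := by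
    intro n
    induction n with
    | zero => simpa [iterWord_succ', iterWord_zero, applyWord_singleton] using h
    | succ m ih => rw [iterWord_succ', ih, applyWord_nil]
  have h2 := (hσ a).eventually (eventually_ge_atTop 1)
  obtain ⟨n, hn⟩ := (h2.and (eventually_ge_atTop 1)).exists
  rcases Nat.exists_eq_add_of_le hn.2 with ⟨m, rfl⟩
  have : lengthIter σ (1 + m) a = 0 := by
    rw [lengthIter, add_comm, h1 m]; rfl
  omega

lemma sum_count_mul [Fintype A] [DecidableEq A] (l : List A) (f : A → ℝ) :
    ∑ a, (l.count a : ℝ) * f a = (l.map f).sum := by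
  induction l with
  | nil => simp
  | cons b t ih =>
    simp only [List.count_cons, List.map_cons, List.sum_cons, Nat.cast_add, Nat.cast_ite,
      Nat.cast_one, Nat.cast_zero, add_mul, Finset.sum_add_distrib, ih, ite_mul, one_mul,
      zero_mul, beq_iff_eq]
    rw [Finset.sum_ite_eq Finset.univ b f]
    simp [add_comm]

lemma length_eq_sum_count [Fintype A] [DecidableEq A] (l : List A) :
    (l.length : ℝ) = ∑ a, (l.count a : ℝ) := by
  have h2 : ∀ m : List A, ((m.map fun _ => (1 : ℝ)).sum) = m.length := by
    intro m
    induction m with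
    | nil => simp
    | cons b t ih => simp [ih]; ring
  have := sum_count_mul l (fun _ => (1 : ℝ))
  simp only [mul_one] at this
  rw [this, h2]

lemma count_applyWord [Fintype A] [DecidableEq A] (σ : A → List A) (i : A) (l : List A) :
    (((applyWord σ l).count i : ℕ) : ℝ) = ∑ b, ((σ b).count i : ℝ) * (l.count b : ℝ) := by
  induction l with
  | nil => simp [applyWord]
  | cons a t ih =>
    rw [applyWord_cons, List.count_append]
    push_cast
    rw [ih]
    simp only [List.count_cons, Nat.cast_add, Nat.cast_ite, Nat.cast_one, Nat.cast_zero,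
      mul_add, Finset.sum_add_distrib, mul_ite, mul_one, mul_zero, beq_iff_eq]
    rw [Finset.sum_ite_eq Finset.univ a (fun b => ((σ b).count i : ℝ))]
    simp [add_comm]

lemma incidence_pow [Fintype A] [DecidableEq A] (σ : A → List A) (n : ℕ) (i j : A) :
    (incidenceMatrix σ ^ n) i j = ((iterWord σ n [j]).count i : ℝ) := by
  induction n generalizing i j with
  | zero =>
    simp only [pow_zero, iterWord_zero]
    rcases eq_or_ne i j with rfl | h
    · simp [Matrix.one_apply]
    · simp [Matrix.one_apply, h, List.count_cons, Ne.symm h]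
  | succ n ih =>
    rw [pow_succ', Matrix.mul_apply, iterWord_succ', count_applyWord]
    exact Finset.sum_congr rfl fun b _ => by rw [ih]; rfl

end Basic

section FP
variable {A : Type*} (σ : A → List A) (y : ℕ → A)

/-- the length of the image of the prefix of length `n`. -/
def Spos (n : ℕ) : ℕ := (applyWord σ (seqTake y n)).length

lemma seqTake_succ (n : ℕ) : seqTake y (n + 1) = seqTake y n ++ [y n] := by
  rw [seqTake, seqTake, List.ofFn_succ', List.concat_eq_append]
  simp

lemma Spos_zero : Spos σ y 0 = 0 := rfl

lemma Spos_succ (n : ℕ) : Spos σ y (n + 1) = Spos σ y n + (σ (y n)).length := by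
  simp [Spos, seqTake_succ, applyWord_append, applyWord_singleton]

lemma prefix_getElem (hy : IsFixedPoint σ y) (n m : ℕ) (h : m < Spos σ y n) :
    (applyWord σ (seqTake y n))[m]'h = y m := by
  have := hy n ⟨m, h⟩
  exact this

lemma seqTake_split (i k' : ℕ) :
    seqTake y (i + k') = seqTake y i ++ List.ofFn (fun j : Fin k' => y (i + (j : ℕ))) := by
  rw [seqTake, List.ofFn_add]
  congr 1

lemma seg_getElem (hy : IsFixedPoint σ y) (i k' m : ℕ)
    (h : m < (applyWord σ (List.ofFn (fun j : Fin k' => y (i + (j : ℕ))))).length) :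
    (applyWord σ (List.ofFn (fun j : Fin k' => y (i + (j : ℕ)))))[m]'h = y (Spos σ y i + m) := by
  have hsplit := seqTake_split y i k'
  have hL : (applyWord σ (seqTake y i)).length = Spos σ y i := rfl
  have hEq : applyWord σ (seqTake y (i + k')) =
      applyWord σ (seqTake y i) ++ applyWord σ (List.ofFn (fun j : Fin k' => y (i + (j : ℕ)))) := by
    rw [hsplit, applyWord_append]
  have hlen : Spos σ y i + m < Spos σ y (i + k') := by
    have h2 : Spos σ y (i + k') = (applyWord σ (seqTake y (i + k'))).length := rfl
    rw [h2, hEq, List.length_append, hL]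
    omega
  have key := prefix_getElem σ y hy (i + k') (Spos σ y i + m) hlen
  replace key := (List.getElem_of_eq hEq _).symm.trans key
  rw [List.getElem_append_right (by rw [hL]; omega)] at key
  convert key using 2
  rw [hL]
  omega

end FP

section Block
variable {B : Type*} (σ : B → List B) (y : ℕ → B) (k : ℕ)

def BlockW : Type _ := {w : Fin k → B // ∃ i : ℕ, ∀ j : Fin k, w j = y (i + (j : ℕ))}

variable (hk : 0 < k) (hne : ∀ a, σ a ≠ []) (hy : IsFixedPoint σ y)

set_option linter.unusedSectionVars false

include hk hne hy

lemma len_ofFn_apply (w : Fin k → B) :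
    (σ (w ⟨0, hk⟩)).length + (k - 1) ≤ (applyWord σ (List.ofFn w)).length := by
  have h1 : (applyWord σ (List.ofFn w)).length = ∑ j : Fin k, (σ (w j)).length := by
    simp [applyWord, List.length_flatMap, List.map_ofFn, List.sum_ofFn, Function.comp]
  have h2 : ∀ j : Fin k, 1 ≤ (σ (w j)).length :=
    fun j => List.length_pos_iff.mpr (hne _)
  have h3 : ∑ j : Fin k, (σ (w j)).length
      = (∑ j ∈ Finset.univ.erase (⟨0, hk⟩ : Fin k), (σ (w j)).length)
        + (σ (w ⟨0, hk⟩)).length :=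
    (Finset.sum_erase_add _ _ (Finset.mem_univ _)).symm
  have h4 : (k - 1) ≤ ∑ j ∈ Finset.univ.erase (⟨0, hk⟩ : Fin k), (σ (w j)).length := by
    have h5 := Finset.card_nsmul_le_sum (Finset.univ.erase (⟨0, hk⟩ : Fin k))
      (fun j => (σ (w j)).length) 1 (fun j _ => h2 j)
    simpa [Finset.card_erase_of_mem, Fintype.card_fin] using h5
  omega

lemma idx_bound (w : Fin k → B) (t : ℕ) (ht : t < (σ (w ⟨0, hk⟩)).length) (j : Fin k) :
    t + (j : ℕ) < (applyWord σ (List.ofFn w)).length := by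
  have h1 := len_ofFn_apply σ y k hk hne hy w
  have h2 := j.2
  omega

def blockFun (w : Fin k → B) (t : ℕ) (ht : t < (σ (w ⟨0, hk⟩)).length) : Fin k → B :=
  fun j => (applyWord σ (List.ofFn w))[t + (j : ℕ)]'(idx_bound σ y k hk hne hy w t ht j)

lemma blockFun_occ (w : Fin k → B) (t : ℕ) (ht : t < (σ (w ⟨0, hk⟩)).length) (i : ℕ)
    (hi : ∀ j : Fin k, w j = y (i + (j : ℕ))) (j : Fin k) :
    blockFun σ y k hk hne hy w t ht j = y (Spos σ y i + t + (j : ℕ)) := by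
  have hw : List.ofFn w = List.ofFn (fun j : Fin k => y (i + (j : ℕ))) :=
    congrArg _ (funext hi)
  unfold blockFun
  rw [List.getElem_of_eq (congrArg (applyWord σ) hw)]
  rw [seg_getElem σ y hy i k (t + (j : ℕ))]
  rw [← add_assoc]

def σB : BlockW y k → List (BlockW y k) := fun w =>
  List.ofFn (fun t : Fin (σ (w.1 ⟨0, hk⟩)).length =>
    ⟨blockFun σ y k hk hne hy w.1 (t : ℕ) t.2, by
      obtain ⟨i, hi⟩ := w.2
      exact ⟨Spos σ y i + (t : ℕ), fun j => blockFun_occ σ y k hk hne hy w.1 (t : ℕ) t.2 i hi j⟩⟩)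

def Yblk : ℕ → BlockW y k := fun i => ⟨fun j => y (i + (j : ℕ)), ⟨i, fun _ => rfl⟩⟩

lemma σB_Yblk (i : ℕ) :
    σB σ y k hk hne hy (Yblk y k i) =
      List.ofFn (fun t : Fin (σ (y i)).length => Yblk y k (Spos σ y i + (t : ℕ))) := by
  apply List.ext_getElem
  · simp only [σB]
    exact List.length_ofFn.trans List.length_ofFn.symm
  · intro t h1 h2
    simp only [σB, List.getElem_ofFn]
    erw [List.getElem_ofFn]
    apply Subtype.ext
    funext j
    exact blockFun_occ σ y k hk hne hy (Yblk y k i).1 t (h1.trans_eq List.length_ofFn) i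
      (fun _ => rfl) j

lemma applyWord_σB_seqTake (n : ℕ) :
    applyWord (σB σ y k hk hne hy) (seqTake (Yblk y k) n) =
      List.ofFn (fun m : Fin (Spos σ y n) => Yblk y k (m : ℕ)) := by
  induction n with
  | zero =>
    have h0 : Spos σ y 0 = 0 := rfl
    simp [seqTake, h0, applyWord_nil]
  | succ n ih =>
    rw [seqTake_succ, applyWord_append, ih, applyWord_singleton, σB_Yblk, Spos_succ,
      List.ofFn_add]
    congr 1

lemma isFixedPoint_σB : IsFixedPoint (σB σ y k hk hne hy) (Yblk y k) := by
  intro n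
  rw [applyWord_σB_seqTake]
  intro i
  simp [List.get_eq_getElem, List.getElem_ofFn]

def πB : BlockW y k → B := fun w => w.1 ⟨0, hk⟩

lemma applyWord_head (l : List B) (hl : 0 < l.length) :
    applyWord σ l = σ (l[0]'hl) ++ applyWord σ l.tail := by
  cases l with
  | nil => simp at hl
  | cons a t => rfl

lemma blockFun_head (w : Fin k → B) (t : ℕ) (ht : t < (σ (w ⟨0, hk⟩)).length) :
    blockFun σ y k hk hne hy w t ht ⟨0, hk⟩ = (σ (w ⟨0, hk⟩))[t]'ht := by
  unfold blockFun
  have h0 : 0 < (List.ofFn w).length := by simpa using hk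
  rw [List.getElem_of_eq (applyWord_head σ y k hk hne hy (List.ofFn w) h0)]
  have e : (List.ofFn w)[0]'h0 = w ⟨0, hk⟩ := by simp
  rw [List.getElem_append_left (by simp [e]; exact ht)]
  simp [e]

lemma map_πB_σB (w : BlockW y k) :
    (σB σ y k hk hne hy w).map (πB y k hk) = σ (πB y k hk w) := by
  unfold σB
  erw [List.map_ofFn]
  conv_rhs => rw [← List.ofFn_getElem (xs := σ (πB y k hk w))]
  exact congrArg List.ofFn (funext fun t => blockFun_head σ y k hk hne hy w.1 (t : ℕ) t.2)

lemma map_πB_applyWord (l : List (BlockW y k)) :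
    (applyWord (σB σ y k hk hne hy) l).map (πB y k hk) = applyWord σ (l.map (πB y k hk)) := by
  induction l with
  | nil => simp [applyWord_nil]
  | cons a t ih =>
    rw [applyWord_cons, List.map_append, ih, List.map_cons, applyWord_cons, map_πB_σB]

lemma map_πB_iterWord (n : ℕ) (l : List (BlockW y k)) :
    (iterWord (σB σ y k hk hne hy) n l).map (πB y k hk) = iterWord σ n (l.map (πB y k hk)) := by
  induction n with
  | zero => simp [iterWord_zero]
  | succ n ih => rw [iterWord_succ', map_πB_applyWord, ih, ← iterWord_succ']

lemma lengthIter_σB (n : ℕ) (w : BlockW y k) :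
    lengthIter (σB σ y k hk hne hy) n w = lengthIter σ n (πB y k hk w) := by
  unfold lengthIter
  rw [← List.length_map (as := iterWord (σB σ y k hk hne hy) n [w]) (πB y k hk), map_πB_iterWord]
  rfl

end Block

attribute [local instance] Matrix.linftyOpNormedRing Matrix.linftyOpNormedAlgebra

section LinAlg
variable {n : Type*} [Fintype n] [DecidableEq n]

lemma toLin'_hasEigenvalue_iff_spectrum {K : Type*} [Field K] (M : Matrix n n K) (μ : K) :
    Module.End.HasEigenvalue (Matrix.toLin' M) μ ↔ μ ∈ spectrum K M := by
  rw [Module.End.hasEigenvalue_iff_mem_spectrum]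
  have h : Matrix.toLinAlgEquiv' M = Matrix.toLin' M := rfl
  rw [← h, AlgEquiv.spectrum_eq]

lemma hasEigenvalue_toLin'_iff_det (M : Matrix n n ℝ) (μ : ℝ) :
    Module.End.HasEigenvalue (Matrix.toLin' M) μ ↔ (M - μ • 1).det = 0 := by
  rw [← Matrix.exists_mulVec_eq_zero_iff]
  constructor
  · intro h
    obtain ⟨v, hv⟩ := h.exists_hasEigenvector
    refine ⟨v, hv.2, ?_⟩
    have hv1 : M *ᵥ v = μ • v := by
      have := hv.1
      rw [Module.End.mem_eigenspace_iff] at this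
      simpa [Matrix.toLin'_apply] using this
    rw [Matrix.sub_mulVec, Matrix.smul_mulVec, Matrix.one_mulVec, hv1, sub_self]
  · rintro ⟨v, hv0, hv⟩
    rw [Matrix.sub_mulVec, Matrix.smul_mulVec, Matrix.one_mulVec, sub_eq_zero] at hv
    exact Module.End.hasEigenvalue_of_hasEigenvector
      ⟨Module.End.mem_eigenspace_iff.mpr (by simpa [Matrix.toLin'_apply] using hv), hv0⟩

lemma hasEigenvalue_transpose_iff (M : Matrix n n ℝ) (μ : ℝ) :
    Module.End.HasEigenvalue (Matrix.toLin' Mᵀ) μ ↔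
      Module.End.HasEigenvalue (Matrix.toLin' M) μ := by
  rw [hasEigenvalue_toLin'_iff_det, hasEigenvalue_toLin'_iff_det]
  have h : Mᵀ - μ • 1 = (M - μ • 1)ᵀ := by
    rw [Matrix.transpose_sub, Matrix.transpose_smul, Matrix.transpose_one]
  rw [h, Matrix.det_transpose]

lemma norm_entry_ofReal (N : Matrix n n ℝ) (h : ∀ i j, 0 ≤ N i j) (i j : n) :
    ‖(N.map Complex.ofReal) i j‖ = N i j := by
  simp [Matrix.map_apply, Complex.norm_real, abs_of_nonneg (h i j)]

lemma norm_map_le_sum (N : Matrix n n ℝ) (h : ∀ i j, 0 ≤ N i j) :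
    ‖N.map Complex.ofReal‖ ≤ ∑ i, ∑ j, N i j := by
  rw [Matrix.linfty_opNorm_def]
  have key : ∀ i : n, ((∑ j, ‖(N.map Complex.ofReal) i j‖₊ : ℝ≥0) : ℝ) ≤ ∑ i', ∑ j, N i' j := by
    intro i
    push_cast
    calc (∑ j, (‖(N.map Complex.ofReal) i j‖₊ : ℝ))
        = ∑ j, N i j := by
          refine Finset.sum_congr rfl fun j _ => ?_
          rw [coe_nnnorm, norm_entry_ofReal N h]
      _ ≤ ∑ i', ∑ j, N i' j :=
          Finset.single_le_sum (f := fun i' => ∑ j, N i' j)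
            (fun i' _ => Finset.sum_nonneg fun j _ => h i' j) (Finset.mem_univ i)
  rcases (Finset.univ : Finset n).eq_empty_or_nonempty with he | hne2
  · simp [he]
  · obtain ⟨i0, -, hsup⟩ := Finset.exists_mem_eq_sup _ hne2
      (fun i : n => ∑ j, ‖(N.map Complex.ofReal) i j‖₊)
    rw [hsup]
    exact key i0

lemma sum_row_le_norm (N : Matrix n n ℝ) (h : ∀ i j, 0 ≤ N i j) (i : n) :
    (∑ j, N i j) ≤ ‖N.map Complex.ofReal‖ := by
  rw [Matrix.linfty_opNorm_def]
  have e : (∑ j, N i j) = ((∑ j, ‖(N.map Complex.ofReal) i j‖₊ : ℝ≥0) : ℝ) := by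
    push_cast
    refine (Finset.sum_congr rfl fun j _ => ?_).symm
    exact norm_entry_ofReal N h i j
  rw [e]
  exact NNReal.coe_le_coe.mpr (Finset.le_sup
    (f := fun i => ∑ j, ‖(N.map Complex.ofReal) i j‖₊) (Finset.mem_univ i))

lemma map_pow_ofReal (N : Matrix n n ℝ) (m : ℕ) :
    (N.map Complex.ofReal) ^ m = (N ^ m).map Complex.ofReal := by
  have h : ∀ K : Matrix n n ℝ,
      K.map Complex.ofReal
        = (Complex.ofRealHom.mapMatrix : Matrix n n ℝ →+* Matrix n n ℂ) K := fun _ => rfl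
  rw [h, h, ← map_pow]

lemma eventually_norm_pow_le (M : Matrix n n ℝ) {α : ℝ}
    (hspec : ∀ ν : ℂ, ν ∈ spectrum ℂ (M.map Complex.ofReal) → ‖ν‖ ≤ α)
    {ε : ℝ} (hε : 0 < ε) (hα : 0 ≤ α) :
    ∀ᶠ m : ℕ in atTop, ‖(M.map Complex.ofReal) ^ m‖ ≤ (α + ε) ^ m := by
  have hsr : spectralRadius ℂ (M.map Complex.ofReal) ≤ ENNReal.ofReal α := by
    refine iSup₂_le fun ν hν => ?_
    rw [← enorm_eq_nnnorm, ← ofReal_norm]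
    exact ENNReal.ofReal_le_ofReal (hspec ν hν)
  have hg := spectrum.pow_nnnorm_pow_one_div_tendsto_nhds_spectralRadius
    (M.map Complex.ofReal)
  have hlt : spectralRadius ℂ (M.map Complex.ofReal) < ENNReal.ofReal (α + ε) :=
    lt_of_le_of_lt hsr (by rw [ENNReal.ofReal_lt_ofReal_iff (by linarith)]; linarith)
  have hev := hg.eventually_lt_const hlt
  filter_upwards [hev, eventually_ge_atTop 1] with m hm hm1
  have hm0 : (m : ℝ) ≠ 0 := Nat.cast_ne_zero.mpr (by omega)
  have h1 := ENNReal.rpow_le_rpow hm.le (by positivity : (0:ℝ) ≤ (m:ℝ))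
  rw [← ENNReal.rpow_mul, one_div_mul_cancel hm0, ENNReal.rpow_one] at h1
  rw [← enorm_eq_nnnorm, ← ofReal_norm] at h1
  have h2 : (ENNReal.ofReal (α + ε)) ^ ((m : ℕ) : ℝ) = ENNReal.ofReal ((α + ε) ^ m) := by
    rw [ENNReal.ofReal_rpow_of_pos (by linarith), Real.rpow_natCast]
  rw [h2] at h1
  exact (ENNReal.ofReal_le_ofReal_iff (by positivity)).mp h1

lemma le_of_pow_le_mul {r s c : ℝ} (hr : 0 ≤ r) (hs : 0 < s)
    (h : ∀ᶠ m : ℕ in atTop, r ^ m ≤ c * s ^ m) : r ≤ s := by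
  by_contra hlt
  push_neg at hlt
  have h1 : Tendsto (fun m : ℕ => (r / s) ^ m) atTop atTop :=
    tendsto_pow_atTop_atTop_of_one_lt (by rw [lt_div_iff₀ hs]; linarith)
  obtain ⟨m, hm1, hm2⟩ := (h.and (h1.eventually_gt_atTop c)).exists
  rw [div_pow, lt_div_iff₀ (pow_pos hs m)] at hm2
  linarith

end LinAlg

lemma eig_norm_le {Bt Wt : Type*} [Fintype Bt] [DecidableEq Bt] [Fintype Wt] [DecidableEq Wt]
    (M : Matrix Bt Bt ℝ) (Mk : Matrix Wt Wt ℝ) {α : ℝ} (hα : 0 ≤ α)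
    (hMpos : ∀ (m : ℕ) (i j : Bt), 0 ≤ (M ^ m) i j)
    (hkpos : ∀ (m : ℕ) (i j : Wt), 0 ≤ (Mk ^ m) i j)
    (hbound : ∀ (m : ℕ) (i j : Wt), (Mk ^ m) i j ≤ ∑ b, ∑ b', (M ^ m) b b')
    (hspec : ∀ μ : ℂ, Module.End.HasEigenvalue
      (Matrix.toLin' (M.map Complex.ofReal)) μ → ‖μ‖ ≤ α)
    (μ : ℂ) (hμ : Module.End.HasEigenvalue
      (Matrix.toLin' (Mk.map Complex.ofReal)) μ) :
    ‖μ‖ ≤ α := by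
  have hμs : μ ∈ spectrum ℂ (Mk.map Complex.ofReal) :=
    (toLin'_hasEigenvalue_iff_spectrum _ μ).mp hμ
  have hspec' : ∀ ν : ℂ, ν ∈ spectrum ℂ (M.map Complex.ofReal) → ‖ν‖ ≤ α :=
    fun ν hν => hspec ν ((toLin'_hasEigenvalue_iff_spectrum _ ν).mpr hν)
  refine le_of_forall_pos_le_add fun ε hε => ?_
  have hev := eventually_norm_pow_le M hspec' hε hα
  have hpows : ∀ m : ℕ, μ ^ m ∈ spectrum ℂ ((Mk.map Complex.ofReal) ^ m) := by
    intro m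
    have hsub := spectrum.subset_polynomial_aeval (Mk.map Complex.ofReal)
      (Polynomial.X ^ m : Polynomial ℂ)
    have hmem : μ ^ m ∈ (fun z => Polynomial.eval z (Polynomial.X ^ m : Polynomial ℂ)) ''
        spectrum ℂ (Mk.map Complex.ofReal) := ⟨μ, hμs, by simp⟩
    have h3 := hsub hmem
    simpa [map_pow] using h3
  set cB := (Fintype.card Bt : ℝ) with hcB
  set cW := (Fintype.card Wt : ℝ) with hcW
  set C := cW * cW * cB * ‖(1 : Matrix Wt Wt ℂ)‖ with hC
  have hC0 : 0 ≤ C := by positivity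
  have key : ∀ᶠ m : ℕ in atTop, ‖μ‖ ^ m ≤ C * (α + ε) ^ m := by
    filter_upwards [hev] with m hm
    have s1 : ‖μ‖ ^ m ≤ ‖(Mk.map Complex.ofReal) ^ m‖ * ‖(1 : Matrix Wt Wt ℂ)‖ := by
      rw [← norm_pow]
      exact spectrum.norm_le_norm_mul_of_mem (hpows m)
    have s2 : ‖(Mk.map Complex.ofReal) ^ m‖ ≤ cW * cW * (∑ b, ∑ b', (M ^ m) b b') := by
      rw [map_pow_ofReal]
      calc ‖(Mk ^ m).map Complex.ofReal‖ ≤ ∑ i, ∑ j, (Mk ^ m) i j :=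
            norm_map_le_sum _ (hkpos m)
        _ ≤ ∑ _i : Wt, ∑ _j : Wt, (∑ b, ∑ b', (M ^ m) b b') := by
            refine Finset.sum_le_sum fun i _ => Finset.sum_le_sum fun j _ => hbound m i j
        _ = cW * cW * (∑ b, ∑ b', (M ^ m) b b') := by
            simp [Finset.sum_const, hcW]; ring
    have s3 : (∑ b, ∑ b', (M ^ m) b b') ≤ cB * ‖(M.map Complex.ofReal) ^ m‖ := by
      rw [map_pow_ofReal]
      calc (∑ b, ∑ b', (M ^ m) b b') ≤ ∑ _b : Bt, ‖(M ^ m).map Complex.ofReal‖ :=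
            Finset.sum_le_sum fun b _ => sum_row_le_norm _ (hMpos m) b
        _ = cB * ‖(M ^ m).map Complex.ofReal‖ := by simp [Finset.sum_const, hcB]
    have s4 : ‖(M.map Complex.ofReal) ^ m‖ ≤ (α + ε) ^ m := hm
    have hn1 : (0:ℝ) ≤ ‖(1 : Matrix Wt Wt ℂ)‖ := norm_nonneg _
    calc ‖μ‖ ^ m ≤ ‖(Mk.map Complex.ofReal) ^ m‖ * ‖(1 : Matrix Wt Wt ℂ)‖ := s1
      _ ≤ (cW * cW * (∑ b, ∑ b', (M ^ m) b b')) * ‖(1 : Matrix Wt Wt ℂ)‖ := by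
          exact mul_le_mul_of_nonneg_right s2 hn1
      _ ≤ (cW * cW * (cB * ‖(M.map Complex.ofReal) ^ m‖)) * ‖(1 : Matrix Wt Wt ℂ)‖ := by
          have : (0:ℝ) ≤ cW * cW := by positivity
          exact mul_le_mul_of_nonneg_right (mul_le_mul_of_nonneg_left s3 this) hn1
      _ ≤ (cW * cW * (cB * (α + ε) ^ m)) * ‖(1 : Matrix Wt Wt ℂ)‖ := by
          have h5 : (0:ℝ) ≤ cW * cW := by positivity
          have h6 : (0:ℝ) ≤ cB := by positivity
          exact mul_le_mul_of_nonneg_right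
            (mul_le_mul_of_nonneg_left (mul_le_mul_of_nonneg_left s4 h6) h5) hn1
      _ = C * (α + ε) ^ m := by ring
  exact le_of_pow_le_mul (norm_nonneg μ) (by linarith) key



/-- the characteristic sequence of the occurrences of a word in an
α-substitutive sequence is α-substitutive. -/
theorem stmt19 {C : Type} [Fintype C] (α : ℝ) (x : ℕ → C) (hx : IsSubstitutiveSeq α x)
    (u : List C) (hu : u ≠ []) :
    IsSubstitutiveSeq α (fun i : ℕ => if OccursAt u x i then (1 : Fin 2) else 0) := by
  obtain ⟨B, instF, instD, σ, y, φ, hσ, hy, hdom, hxy⟩ := hx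
  have hk : 0 < u.length := List.length_pos_iff.mpr hu
  have hne : ∀ a, σ a ≠ [] := subst_ne_nil hσ
  have hyfix : IsFixedPoint σ y := hy.1
  haveI : Fintype (BlockW y u.length) := by unfold BlockW; infer_instance
  haveI : DecidableEq (BlockW y u.length) := Classical.decEq _
  set M := incidenceMatrix σ with hM
  set Mk := incidenceMatrix (σB σ y u.length hk hne hyfix) with hMk
  -- entries of powers are counts
  have hMpos : ∀ (m : ℕ) (i j : B), 0 ≤ (M ^ m) i j := by
    intro m i j
    rw [hM, incidence_pow]
    positivity
  have hkpos : ∀ (m : ℕ) (i j : BlockW y u.length), 0 ≤ (Mk ^ m) i j := by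
    intro m i j
    rw [hMk, incidence_pow]
    positivity
  have hbound : ∀ (m : ℕ) (i j : BlockW y u.length),
      (Mk ^ m) i j ≤ ∑ b, ∑ b', (M ^ m) b b' := by
    intro m i j
    rw [hMk, incidence_pow]
    calc ((iterWord (σB σ y u.length hk hne hyfix) m [j]).count i : ℝ)
        ≤ ((iterWord (σB σ y u.length hk hne hyfix) m [j]).length : ℝ) := by
          exact_mod_cast List.count_le_length
      _ = (lengthIter σ m (πB y u.length hk j) : ℝ) := by
          rw [← lengthIter_σB σ y u.length hk hne hyfix m j]; rfl
      _ = ∑ b, ((iterWord σ m [πB y u.length hk j]).count b : ℝ) :=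
          length_eq_sum_count _
      _ = ∑ b, (M ^ m) b (πB y u.length hk j) := by
          refine Finset.sum_congr rfl fun b _ => ?_
          rw [hM, incidence_pow]
      _ ≤ ∑ b, ∑ b', (M ^ m) b b' := by
          refine Finset.sum_le_sum fun b _ => ?_
          exact Finset.single_le_sum (f := fun b' => (M ^ m) b b')
            (fun b' _ => hMpos m b b') (Finset.mem_univ _)
  -- α is an eigenvalue of Mk
  have heigk : Module.End.HasEigenvalue (Matrix.toLin' Mk) α := by
    have ht := (hasEigenvalue_transpose_iff M α).mpr hdom.2.1
    obtain ⟨v, hv⟩ := ht.exists_hasEigenvector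
    have hv1 : Mᵀ *ᵥ v = α • v := by
      have := hv.1
      rw [Module.End.mem_eigenspace_iff] at this
      simpa [Matrix.toLin'_apply] using this
    set w : BlockW y u.length → ℝ := fun bl => v (πB y u.length hk bl) with hw
    have hweig : Mkᵀ *ᵥ w = α • w := by
      funext bl
      have lhs : (Mkᵀ *ᵥ w) bl
          = ∑ bl', ((σB σ y u.length hk hne hyfix bl).count bl' : ℝ) * w bl' := by
        simp [Matrix.mulVec, dotProduct, hMk, incidenceMatrix, Matrix.transpose_apply]
      have step : ∑ bl', ((σB σ y u.length hk hne hyfix bl).count bl' : ℝ) * w bl'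
          = ∑ b, ((σ (πB y u.length hk bl)).count b : ℝ) * v b := by
        rw [sum_count_mul, sum_count_mul]
        have e1 : (σB σ y u.length hk hne hyfix bl).map w
            = ((σB σ y u.length hk hne hyfix bl).map (πB y u.length hk)).map v := by
          rw [List.map_map]; rfl
        rw [e1, map_πB_σB]
      have rhs : ∑ b, ((σ (πB y u.length hk bl)).count b : ℝ) * v b
          = (Mᵀ *ᵥ v) (πB y u.length hk bl) := by
        simp [Matrix.mulVec, dotProduct, hM, incidenceMatrix, Matrix.transpose_apply]
      rw [lhs, step, rhs, hv1]
      rfl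
    have hw0 : w ≠ 0 := by
      obtain ⟨b, hb⟩ := Function.ne_iff.mp hv.2
      obtain ⟨i, hi⟩ := hy.2 b
      refine Function.ne_iff.mpr ⟨Yblk y u.length i, ?_⟩
      have : w (Yblk y u.length i) = v (y i) := rfl
      rw [this, hi]
      simpa using hb
    have hkT : Module.End.HasEigenvalue (Matrix.toLin' Mkᵀ) α :=
      Module.End.hasEigenvalue_of_hasEigenvector
        ⟨Module.End.mem_eigenspace_iff.mpr
          (by rw [Matrix.toLin'_apply, hweig]), hw0⟩
    exact (hasEigenvalue_transpose_iff Mk α).mp hkT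
  -- assemble
  refine ⟨BlockW y u.length, inferInstance, inferInstance,
    σB σ y u.length hk hne hyfix, Yblk y u.length,
    fun bl => if (∀ j : Fin u.length, u.get j = φ (bl.1 j)) then (1 : Fin 2) else 0,
    ?_, ⟨isFixedPoint_σB σ y u.length hk hne hyfix, ?_⟩, ⟨hdom.1, heigk, ?_⟩, ?_⟩
  · intro w
    exact (hσ (πB y u.length hk w)).congr
      (fun n => (lengthIter_σB σ y u.length hk hne hyfix n w).symm)
  · intro w
    obtain ⟨i, hi⟩ := w.2
    exact ⟨i, Subtype.ext (funext fun j => (hi j).symm)⟩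
  · intro μ hμ
    exact eig_norm_le M Mk hdom.1 hMpos hkpos hbound hdom.2.2 μ hμ
  · funext i
    subst hxy
    exact if_congr Iff.rfl rfl rfl

end Cobham
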